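/- Let $f : [0, \infty) \to \mathbb{R}$ be locally integrable with essential total variation $V := T.V.\{f; (0,\infty)\} < \infty$. For $h > 0$ and $k \geq 0$ define $m_k = \frac{1}{h}\int_{kh}^{(k+1)h} f(t)\, dt$. Then $\sum_{k \geq 1} |m_k - m_{k-1}| \leq V$. -/

import Mathlib

open MeasureTheory

set_option maxHeartbeats 1000000

theorem stmt14 (f : ℝ → ℝ) (h : ℝ) (hh : 0 < h)
    (hloc : LocallyIntegrableOn f (Set.Ici 0))
    (hV : eVariationOn f (Set.Ioi 0) ≠ ⊤) :
    (∑' k : ℕ,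
        ENNReal.ofReal
          |(1 / h) * (∫ t in (((k:ℝ) + 1) * h)..(((k:ℝ) + 2) * h), f t)
            - (1 / h) * (∫ t in ((k:ℝ) * h)..(((k:ℝ) + 1) * h), f t)|)
      ≤ eVariationOn f (Set.Ioi 0) := by
  set V := eVariationOn f (Set.Ioi 0) with hVdef
  -- shifted integrability
  have hfix : ∀ a : ℝ, 0 ≤ a → IntervalIntegrable (fun s => f (s + a)) volume 0 h := by
    intro a ha
    have hIcc : IntegrableOn f (Set.Icc a (a + h)) volume :=
      hloc.integrableOn_compact_subset (fun x hx => le_trans ha hx.1) isCompact_Icc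
    have h1 : IntervalIntegrable f volume a (a + h) := by
      rw [intervalIntegrable_iff_integrableOn_Icc_of_le (by linarith)]
      exact hIcc
    simpa using h1.comp_add_right a
  -- pointwise variation bound
  have hsum : ∀ N : ℕ, ∀ s ∈ Set.Ioc (0:ℝ) h,
      ∑ k ∈ Finset.range N, |f (s + ((k:ℝ) + 1) * h) - f (s + (k:ℝ) * h)| ≤ V.toReal := by
    intro N s hs
    have hmono : Monotone (fun k : ℕ => s + (k:ℝ) * h) := by
      intro i j hij
      exact add_le_add (le_refl s)
        (mul_le_mul_of_nonneg_right (by exact_mod_cast hij : (i:ℝ) ≤ j) hh.le)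
    have hmem : ∀ k : ℕ, s + (k:ℝ) * h ∈ Set.Ioi (0:ℝ) := by
      intro k
      have : (0:ℝ) ≤ (k:ℝ) * h := by positivity
      have := hs.1
      simp only [Set.mem_Ioi]
      linarith
    have key := eVariationOn.sum_le (f := f) (n := N) hmono hmem
    have heq : ∀ k ∈ Finset.range N,
        edist (f (s + ((k:ℕ) + 1 : ℕ) * h)) (f (s + (k:ℝ) * h))
          = ENNReal.ofReal |f (s + ((k:ℝ) + 1) * h) - f (s + (k:ℝ) * h)| := by
      intro k _
      rw [edist_dist, Real.dist_eq]
      push_cast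
      ring_nf
    rw [Finset.sum_congr rfl heq] at key
    rw [← ENNReal.ofReal_sum_of_nonneg (fun k _ => abs_nonneg _)] at key
    exact (ENNReal.ofReal_le_iff_le_toReal hV).mp key
  -- per-term bound
  have hterm : ∀ k : ℕ,
      |(1 / h) * (∫ t in (((k:ℝ) + 1) * h)..(((k:ℝ) + 2) * h), f t)
        - (1 / h) * (∫ t in ((k:ℝ) * h)..(((k:ℝ) + 1) * h), f t)|
      ≤ (1 / h) * ∫ s in (0:ℝ)..h, |f (s + ((k:ℝ) + 1) * h) - f (s + (k:ℝ) * h)| := by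
    intro k
    have i1 : IntervalIntegrable (fun s => f (s + ((k:ℝ) + 1) * h)) volume 0 h :=
      hfix _ (by positivity)
    have i0 : IntervalIntegrable (fun s => f (s + (k:ℝ) * h)) volume 0 h :=
      hfix _ (by positivity)
    have e1 : (∫ t in (((k:ℝ) + 1) * h)..(((k:ℝ) + 2) * h), f t)
        = ∫ s in (0:ℝ)..h, f (s + ((k:ℝ) + 1) * h) := by
      rw [intervalIntegral.integral_comp_add_right]
      congr 1 <;> ring
    have e0 : (∫ t in ((k:ℝ) * h)..(((k:ℝ) + 1) * h), f t)
        = ∫ s in (0:ℝ)..h, f (s + (k:ℝ) * h) := by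
      rw [intervalIntegral.integral_comp_add_right]
      congr 1 <;> ring
    rw [e1, e0, ← mul_sub, ← intervalIntegral.integral_sub i1 i0, abs_mul,
      abs_of_pos (by positivity : (0:ℝ) < 1 / h)]
    exact mul_le_mul_of_nonneg_left
      (intervalIntegral.abs_integral_le_integral_abs hh.le) (by positivity)
  -- finite sum bound
  have hfin : ∀ N : ℕ,
      ∑ k ∈ Finset.range N,
        |(1 / h) * (∫ t in (((k:ℝ) + 1) * h)..(((k:ℝ) + 2) * h), f t)
          - (1 / h) * (∫ t in ((k:ℝ) * h)..(((k:ℝ) + 1) * h), f t)| ≤ V.toReal := by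
    intro N
    have habs : ∀ k ∈ Finset.range N,
        IntervalIntegrable (fun s => |f (s + ((k:ℝ) + 1) * h) - f (s + (k:ℝ) * h)|)
          volume 0 h := by
      intro k _
      exact ((hfix _ (by positivity)).sub (hfix _ (by positivity))).abs
    calc ∑ k ∈ Finset.range N,
          |(1 / h) * (∫ t in (((k:ℝ) + 1) * h)..(((k:ℝ) + 2) * h), f t)
            - (1 / h) * (∫ t in ((k:ℝ) * h)..(((k:ℝ) + 1) * h), f t)|
        ≤ ∑ k ∈ Finset.range N,
            (1 / h) * ∫ s in (0:ℝ)..h, |f (s + ((k:ℝ) + 1) * h) - f (s + (k:ℝ) * h)| :=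
          Finset.sum_le_sum fun k _ => hterm k
      _ = (1 / h) * ∫ s in (0:ℝ)..h,
            ∑ k ∈ Finset.range N, |f (s + ((k:ℝ) + 1) * h) - f (s + (k:ℝ) * h)| := by
          rw [← Finset.mul_sum, intervalIntegral.integral_finset_sum habs]
      _ ≤ (1 / h) * ∫ s in (0:ℝ)..h, V.toReal := by
          refine mul_le_mul_of_nonneg_left ?_ (by positivity)
          have hsint : IntervalIntegrable
              (fun s => ∑ k ∈ Finset.range N, |f (s + ((k:ℝ) + 1) * h) - f (s + (k:ℝ) * h)|)
              volume 0 h := by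
            have h2 := IntervalIntegrable.sum (μ := volume) (a := 0) (b := h)
              (Finset.range N) habs
            rwa [← Finset.sum_fn]
          refine intervalIntegral.integral_mono_ae_restrict hh.le hsint
            intervalIntegrable_const ?_
          have h0 : ∀ᵐ s ∂(volume : Measure ℝ), s ≠ 0 := by
            rw [ae_iff]
            have : {a : ℝ | ¬a ≠ 0} = {0} := by ext x; simp
            rw [this]
            exact measure_singleton 0
          filter_upwards [ae_restrict_mem measurableSet_Icc, ae_restrict_of_ae h0]
            with s hs hs0
          exact hsum N s ⟨lt_of_le_of_ne hs.1 (Ne.symm hs0), hs.2⟩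
      _ = V.toReal := by
          rw [intervalIntegral.integral_const, smul_eq_mul, sub_zero]
          field_simp
  -- conclusion
  rw [ENNReal.tsum_eq_iSup_sum]
  refine iSup_le fun s => ?_
  obtain ⟨N, hN⟩ := s.exists_nat_subset_range
  calc ∑ k ∈ s, ENNReal.ofReal
        |(1 / h) * (∫ t in (((k:ℝ) + 1) * h)..(((k:ℝ) + 2) * h), f t)
          - (1 / h) * (∫ t in ((k:ℝ) * h)..(((k:ℝ) + 1) * h), f t)|
      ≤ ∑ k ∈ Finset.range N, ENNReal.ofReal
          |(1 / h) * (∫ t in (((k:ℝ) + 1) * h)..(((k:ℝ) + 2) * h), f t)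
            - (1 / h) * (∫ t in ((k:ℝ) * h)..(((k:ℝ) + 1) * h), f t)| :=
        Finset.sum_le_sum_of_subset hN
    _ = ENNReal.ofReal (∑ k ∈ Finset.range N,
          |(1 / h) * (∫ t in (((k:ℝ) + 1) * h)..(((k:ℝ) + 2) * h), f t)
            - (1 / h) * (∫ t in ((k:ℝ) * h)..(((k:ℝ) + 1) * h), f t)|) :=
        (ENNReal.ofReal_sum_of_nonneg fun k _ => abs_nonneg _).symm
    _ ≤ ENNReal.ofReal V.toReal := ENNReal.ofReal_le_ofReal (hfin N)
    _ = V := ENNReal.ofReal_toReal hV
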